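/- Let F: X → P(Y) be C-convex and x₀ ∈ dom F a scalarized weak minimizer with F(x₀) + C ≠ Y. Then for all x ∈ X there exists w* ∈ W* such that φ_{F,w*}(x) ≠ −∞ and (φ_{F,w*})↓(x, x₀ − x) ≤ 0. -/

import Mathlib

open Pointwise Set Filter Topology

/-- Scalarization of a set `A ⊆ Y` by a weak-star functional: `inf {w(a) : a ∈ A}` in `EReal`
(with `inf ∅ = +∞`). -/
noncomputable def scal {Y : Type*} [AddCommMonoid Y] [Module ℝ Y] [TopologicalSpace Y]
    (w : WeakDual ℝ Y) (A : Set Y) : EReal :=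
  sInf ((fun a => ((w a : ℝ) : EReal)) '' A)

/-- `F` is `C`-convex. -/
def CConvex {X Y : Type*} [AddCommGroup X] [Module ℝ X] [AddCommGroup Y] [Module ℝ Y]
    (F : X → Set Y) (C : Set Y) : Prop :=
  ∀ x₁ x₂ : X, ∀ t : ℝ, t ∈ Set.Icc (0 : ℝ) 1 →
    t • F x₁ + (1 - t) • F x₂ ⊆ F (t • x₁ + (1 - t) • x₂) + C

/-- Lower Dini directional derivative of `φ : X → EReal` at `x` in direction `d`:
`liminf_{t → 0+} (φ (x + t • d) - φ x) * (1/t)`. -/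
noncomputable def diniX {X : Type*} [AddCommGroup X] [Module ℝ X]
    (φ : X → EReal) (x d : X) : EReal :=
  Filter.liminf (fun t : ℝ => (φ (x + t • d) - φ x) * (((1 : ℝ) / t : ℝ) : EReal))
    (nhdsWithin 0 (Set.Ioi 0))

/-- From `scal w A < c` get an element of `A` with `w a < c`. -/
lemma scal_lt_aux {Y : Type*} [AddCommMonoid Y] [Module ℝ Y] [TopologicalSpace Y]
    (w : WeakDual ℝ Y) (A : Set Y) (c : ℝ) (h : scal w A < (c : EReal)) :
    ∃ a ∈ A, w a < c := by
  obtain ⟨v, hv, hvc⟩ := sInf_lt_iff.mp h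
  obtain ⟨a, ha, rfl⟩ := hv
  exact ⟨a, ha, by exact_mod_cast (show ((w a:ℝ):EReal) < (c:EReal) from hvc)⟩

lemma scal_le_aux {Y : Type*} [AddCommMonoid Y] [Module ℝ Y] [TopologicalSpace Y]
    (w : WeakDual ℝ Y) (A : Set Y) (a : Y) (ha : a ∈ A) :
    scal w A ≤ ((w a : ℝ) : EReal) :=
  sInf_le (Set.mem_image_of_mem _ ha)

theorem stmt_14 {X Y : Type*} [AddCommGroup X] [Module ℝ X]
    [AddCommGroup Y] [Module ℝ Y] [TopologicalSpace Y]
    [IsTopologicalAddGroup Y] [ContinuousSMul ℝ Y] [LocallyConvexSpace ℝ Y] [T2Space Y]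
    (C : Set Y) (hclosed : IsClosed C) (hconv : Convex ℝ C)
    (hcone : ∀ c ∈ C, ∀ r : ℝ, 0 ≤ r → r • c ∈ C)
    (hint : (interior C).Nonempty) (hCne : C ≠ Set.univ)
    (Wstar : Set (WeakDual ℝ Y)) (hWcpt : IsCompact Wstar)
    (hWsub : ∀ w ∈ Wstar, ∀ c ∈ C, 0 ≤ w c) (hW0 : (0 : WeakDual ℝ Y) ∉ Wstar)
    (hWbase : ∀ w : WeakDual ℝ Y, (∀ c ∈ C, 0 ≤ w c) → w ≠ 0 →
      ∃ t : ℝ, 0 < t ∧ ∃ w' ∈ Wstar, w = t • w')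
    (F : X → Set Y) (hF : CConvex F C) (x₀ : X) (hx₀ : (F x₀).Nonempty)
    (hne : F x₀ + C ≠ Set.univ)
    (hmin : ∀ x : X, ∃ w ∈ Wstar, scal w (F x₀) ≤ scal w (F x) ∧ scal w (F x) ≠ ⊥) :
    ∀ x : X, ∃ w ∈ Wstar, scal w (F x) ≠ ⊥ ∧
      diniX (fun z => scal w (F z)) x (x₀ - x) ≤ 0 := by
  intro x
  obtain ⟨w, hwW, hle, hnb⟩ := hmin x
  refine ⟨w, hwW, hnb, ?_⟩
  have hev : ∀ᶠ t : ℝ in 𝓝[>] (0:ℝ),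
      ((scal w (F (x + t • (x₀ - x))) - scal w (F x)) * (((1:ℝ)/t : ℝ) : EReal)) ≤ 0 := by
    filter_upwards [Ioo_mem_nhdsGT_of_mem (Set.left_mem_Ico.2 one_pos)] with t ht
    obtain ⟨ht0, ht1⟩ := ht
    have htpos : (0 : EReal) < (((1:ℝ)/t : ℝ) : EReal) := by
      exact_mod_cast (one_div_pos.mpr ht0)
    rcases eq_or_ne (scal w (F x)) ⊤ with hT | hT
    · rw [hT]
      have hb : scal w (F (x + t • (x₀ - x))) - (⊤ : EReal) = ⊥ := by
        rw [sub_eq_add_neg, EReal.neg_top, EReal.add_bot]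
      rw [hb, EReal.bot_mul_of_pos htpos]
      exact bot_le
    · -- scal w (F x) is a real number r
      set r : ℝ := (scal w (F x)).toReal with hrdef
      have hr : ((r : ℝ) : EReal) = scal w (F x) := EReal.coe_toReal hT hnb
      -- the convexity inclusion
      have hp : t • x₀ + (1 - t) • x = x + t • (x₀ - x) := by module
      have hsub := hF x₀ x t ⟨ht0.le, ht1.le⟩
      rw [hp] at hsub
      -- key: scal w (F (x + t • (x₀ - x))) ≤ r
      have hkey : scal w (F (x + t • (x₀ - x))) ≤ ((r : ℝ) : EReal) := by
        by_contra hcon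
        push_neg at hcon
        obtain ⟨z, hz1, hz2⟩ := EReal.exists_between_coe_real hcon
        set ε : ℝ := z - r with hεdef
        have hε : 0 < ε := by
          have : (r : ℝ) < z := by exact_mod_cast hz1
          linarith
        have hrε : (r : EReal) < ((r + ε : ℝ) : EReal) := by
          exact_mod_cast (by linarith : r < r + ε)
        obtain ⟨a, haF, hwa⟩ := scal_lt_aux w (F x₀) (r + ε) (lt_of_le_of_lt (hle.trans hr.ge) hrε)
        obtain ⟨b, hbF, hwb⟩ := scal_lt_aux w (F x) (r + ε) (lt_of_le_of_lt hr.ge hrε)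
        -- the combination lies in F p + C
        have hmem : t • a + (1 - t) • b ∈ F (x + t • (x₀ - x)) + C := by
          apply hsub
          exact Set.add_mem_add (Set.smul_mem_smul_set haF) (Set.smul_mem_smul_set hbF)
        obtain ⟨y, hy, c, hc, hyc⟩ := hmem
        have hwc : 0 ≤ w c := hWsub w hwW c hc
        have hwy : w y < r + ε := by
          have h1 : w y + w c = t * w a + (1 - t) * w b := by
            have := congrArg w hyc
            simpa [map_add, map_smul, smul_eq_mul] using this
          nlinarith
        have := scal_le_aux w (F (x + t • (x₀ - x))) y hy
        have h2 : ((w y : ℝ) : EReal) < ((r + ε : ℝ) : EReal) := by exact_mod_cast hwy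
        have h3 : ((r + ε : ℝ) : EReal) = (z : EReal) := by
          rw [hεdef]; norm_num
        have : scal w (F (x + t • (x₀ - x))) < (z : EReal) :=
          lt_of_le_of_lt this (h3 ▸ h2)
        exact absurd (this.trans hz2) (lt_irrefl _)
      -- conclude the term is ≤ 0
      have hsub0 : scal w (F (x + t • (x₀ - x))) - scal w (F x) ≤ 0 := by
        rw [← hr]
        calc scal w (F (x + t • (x₀ - x))) - (r : EReal)
            ≤ ((r : ℝ) : EReal) - (r : EReal) := by
              exact EReal.sub_le_sub hkey le_rfl
          _ = 0 := by
              rw [← EReal.coe_sub]; norm_num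
      rcases le_iff_lt_or_eq.mp hsub0 with hlt | heq
      · rcases lt_or_ge (scal w (F (x + t • (x₀ - x))) - scal w (F x)) ⊥ with h | h
        · exact absurd h (not_lt_bot)
        · rcases eq_or_ne (scal w (F (x + t • (x₀ - x))) - scal w (F x)) ⊥ with hB | hB
          · rw [hB, EReal.bot_mul_of_pos htpos]; exact bot_le
          · -- it's a nonpositive real
            set s := scal w (F (x + t • (x₀ - x))) - scal w (F x) with hs
            have hsT : s ≠ ⊤ := ne_top_of_lt (hlt.trans_le le_top)
            have hsr : ((s.toReal : ℝ) : EReal) = s := EReal.coe_toReal hsT hB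
            rw [← hsr, ← EReal.coe_mul]
            have hs0 : s.toReal ≤ 0 := by
              have : ((s.toReal : ℝ) : EReal) ≤ ((0:ℝ) : EReal) := by
                rw [hsr]; exact_mod_cast hsub0
              exact_mod_cast this
            have : s.toReal * ((1:ℝ)/t) ≤ 0 :=
              mul_nonpos_of_nonpos_of_nonneg hs0 (by positivity)
            exact_mod_cast this
      · rw [heq, EReal.zero_mul]
  have hne' : (𝓝[>] (0:ℝ)).NeBot := nhdsGT_neBot 0
  calc diniX (fun z => scal w (F z)) x (x₀ - x)
      = Filter.liminf (fun t : ℝ =>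
          (scal w (F (x + t • (x₀ - x))) - scal w (F x)) * (((1:ℝ)/t : ℝ) : EReal))
          (𝓝[>] (0:ℝ)) := rfl
    _ ≤ Filter.limsup (fun t : ℝ =>
          (scal w (F (x + t • (x₀ - x))) - scal w (F x)) * (((1:ℝ)/t : ℝ) : EReal))
          (𝓝[>] (0:ℝ)) := Filter.liminf_le_limsup
    _ ≤ 0 := Filter.limsup_le_of_le (by isBoundedDefault) hev
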